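/- A C² function u on an open set X ⊂ ℝⁿ is subaffine (i.e., for every compact K ⊂ X and affine function a, u ≤ a on ∂K implies u ≤ a on K) if and only if for every x ∈ X the Hessian of u at x has at least one eigenvalue ≥ 0. -/

import Mathlib

open Matrix Set

section helpers
variable {n : ℕ} {X : Set (Fin n → ℝ)} {u : (Fin n → ℝ) → ℝ}

private lemma line_deriv1 (hX : IsOpen X) (hu : ContDiffOn ℝ 2 u X)
    (p v : Fin n → ℝ) {t : ℝ} (h : p + t • v ∈ X) :
    HasDerivAt (fun s : ℝ => u (p + s • v)) (fderiv ℝ u (p + t • v) v) t := by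
  have hdiff : DifferentiableAt ℝ u (p + t • v) :=
    (hu.contDiffAt (hX.mem_nhds h)).differentiableAt (by norm_num)
  have hL : HasDerivAt (fun s : ℝ => p + s • v) v t := by
    simpa using ((hasDerivAt_id t).smul_const v).const_add p
  exact hdiff.hasFDerivAt.comp_hasDerivAt t hL

private lemma line_deriv2 (hX : IsOpen X) (hu : ContDiffOn ℝ 2 u X)
    (p v : Fin n → ℝ) {t : ℝ} (h : p + t • v ∈ X) :
    HasDerivAt (fun s : ℝ => fderiv ℝ u (p + s • v) v)
      (fderiv ℝ (fderiv ℝ u) (p + t • v) v v) t := by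
  have h1 : ContDiffAt ℝ 1 (fderiv ℝ u) (p + t • v) :=
    (hu.contDiffAt (hX.mem_nhds h)).fderiv_right (by norm_num)
  have hdiff : DifferentiableAt ℝ (fderiv ℝ u) (p + t • v) :=
    h1.differentiableAt one_ne_zero
  have hL : HasDerivAt (fun s : ℝ => p + s • v) v t := by
    simpa using ((hasDerivAt_id t).smul_const v).const_add p
  have hc : HasDerivAt (fun s : ℝ => fderiv ℝ u (p + s • v))
      (fderiv ℝ (fderiv ℝ u) (p + t • v) v) t :=
    hdiff.hasFDerivAt.comp_hasDerivAt t hL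
  simpa using hc.clm_apply (hasDerivAt_const t v)

private lemma hess_eq (hX : IsOpen X) {x : Fin n → ℝ} (hx : x ∈ X) (v : Fin n → ℝ) :
    iteratedFDerivWithin ℝ 2 u X x ![v, v] = fderiv ℝ (fderiv ℝ u) x v v := by
  rw [iteratedFDerivWithin_of_isOpen 2 hX hx, iteratedFDeriv_two_apply]
  simp

private lemma hess_cont (hX : IsOpen X) (hu : ContDiffOn ℝ 2 u X) {x : Fin n → ℝ} (hx : x ∈ X) :
    ContinuousAt (fderiv ℝ (fderiv ℝ u)) x := by
  have h1 : ContDiffAt ℝ 1 (fderiv ℝ u) x :=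
    (hu.contDiffAt (hX.mem_nhds hx)).fderiv_right (by norm_num)
  exact (h1.fderiv_right (by norm_num) : ContDiffAt ℝ 0 _ x).continuousAt

end helpers


private lemma taylor_le {g G G' : ℝ → ℝ} {m : ℝ}
    (hg : ∀ t ∈ Icc (0:ℝ) 1, HasDerivAt g (G t) t)
    (hG : ∀ t ∈ Icc (0:ℝ) 1, HasDerivAt G (G' t) t)
    (hm : ∀ t ∈ Icc (0:ℝ) 1, G' t ≤ m) :
    g 1 ≤ g 0 + G 0 + m / 2 := by
  set H : ℝ → ℝ := fun t => G t - G 0 - m * t with hH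
  have hHd : ∀ t ∈ Icc (0:ℝ) 1, HasDerivAt H (G' t - m) t := by
    intro t ht
    have := ((hG t ht).sub_const (G 0)).sub ((hasDerivAt_id t).const_mul m)
    simp only [mul_one] at this
    exact this
  have hHanti : AntitoneOn H (Icc 0 1) := by
    apply antitoneOn_of_deriv_nonpos (convex_Icc 0 1)
    · intro t ht; exact (hHd t ht).continuousAt.continuousWithinAt
    · intro t ht; rw [interior_Icc] at ht
      exact ((hHd t (Ioo_subset_Icc_self ht)).differentiableAt).differentiableWithinAt
    · intro t ht; rw [interior_Icc] at ht
      rw [(hHd t (Ioo_subset_Icc_self ht)).deriv]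
      have := hm t (Ioo_subset_Icc_self ht); linarith
  have hHle : ∀ t ∈ Icc (0:ℝ) 1, H t ≤ 0 := by
    intro t ht
    have := hHanti (left_mem_Icc.2 one_pos.le) ht ht.1
    simpa [hH] using this
  set h : ℝ → ℝ := fun t => g t - g 0 - G 0 * t - m / 2 * t ^ 2 with hh
  have hhd : ∀ t ∈ Icc (0:ℝ) 1, HasDerivAt h (H t) t := by
    intro t ht
    have h2 := (((hg t ht).sub_const (g 0)).sub ((hasDerivAt_id t).const_mul (G 0))).sub
      ((hasDerivAt_pow 2 t).const_mul (m/2))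
    convert h2 using 1 <;> try rfl
    simp [hH]; ring
  have hhanti : AntitoneOn h (Icc 0 1) := by
    apply antitoneOn_of_deriv_nonpos (convex_Icc 0 1)
    · intro t ht; exact (hhd t ht).continuousAt.continuousWithinAt
    · intro t ht; rw [interior_Icc] at ht
      exact ((hhd t (Ioo_subset_Icc_self ht)).differentiableAt).differentiableWithinAt
    · intro t ht; rw [interior_Icc] at ht
      rw [(hhd t (Ioo_subset_Icc_self ht)).deriv]
      exact hHle t (Ioo_subset_Icc_self ht)
  have hfin := hhanti (left_mem_Icc.2 one_pos.le) (right_mem_Icc.2 one_pos.le) zero_le_one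
  have e0 : h 0 = 0 := by simp [hh]
  have e1 : h 1 = g 1 - g 0 - G 0 - m/2 := by simp [hh]
  rw [e0, e1] at hfin
  linarith

private lemma no_interior_max {g G : ℝ → ℝ} {G' : ℝ}
    (hg : ∀ᶠ t in nhds (0:ℝ), HasDerivAt g (G t) t)
    (hG : HasDerivAt G G' 0) (hmax : IsLocalMax g 0) (hpos : 0 < G') : False := by
  have hG0 : G 0 = 0 := hmax.hasDerivAt_eq_zero hg.self_of_nhds
  have hslope : ∀ᶠ t in nhdsWithin (0:ℝ) {(0:ℝ)}ᶜ, 0 < slope G 0 t :=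
    (hasDerivAt_iff_tendsto_slope.1 hG).eventually_const_lt hpos
  rw [eventually_nhdsWithin_iff] at hslope
  have hall : ∀ᶠ t in nhds (0:ℝ),
      (HasDerivAt g (G t) t ∧ g t ≤ g 0) ∧ (t ∈ ({(0:ℝ)}ᶜ : Set ℝ) → 0 < slope G 0 t) :=
    (hg.and hmax).and hslope
  rcases Metric.eventually_nhds_iff.1 hall with ⟨ε, hε, hP⟩
  set b := ε/2 with hb
  have hbpos : 0 < b := by positivity
  have hmem : ∀ t ∈ Icc (0:ℝ) b, dist t 0 < ε := by
    intro t ht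
    rw [Real.dist_eq, sub_zero, abs_of_nonneg ht.1]
    linarith [ht.2]
  have hmono : StrictMonoOn g (Icc 0 b) := by
    apply strictMonoOn_of_deriv_pos (convex_Icc 0 b)
    · intro t ht
      exact ((hP (hmem t ht)).1.1).continuousAt.continuousWithinAt
    · intro t ht
      rw [interior_Icc] at ht
      have h1 := hP (hmem t ⟨le_of_lt ht.1, le_of_lt ht.2⟩)
      have hs := h1.2 (by simpa using (ne_of_gt ht.1))
      rw [slope_def_field, hG0, sub_zero, sub_zero] at hs
      have hGt : 0 < G t := by
        have := mul_pos hs ht.1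
        rwa [div_mul_cancel₀ _ (ne_of_gt ht.1)] at this
      rw [h1.1.1.deriv]; exact hGt
  have hlast := hmono (left_mem_Icc.2 hbpos.le) (right_mem_Icc.2 hbpos.le) hbpos
  have := (hP (hmem b (right_mem_Icc.2 hbpos.le))).1.2
  linarith


private lemma dot_eq_fderiv {n : ℕ} (l : (Fin n → ℝ) →L[ℝ] ℝ) (x : Fin n → ℝ) :
    (fun i => l (Pi.single i 1 : Fin n → ℝ)) ⬝ᵥ x = l x := by
  have hx : x = ∑ i, x i • (Pi.single i 1 : Fin n → ℝ) := by
    ext j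
    rw [Finset.sum_apply]
    simp [Pi.single_apply]
  calc (fun i => l (Pi.single i 1 : Fin n → ℝ)) ⬝ᵥ x = ∑ i, l (Pi.single i 1) * x i := rfl
    _ = ∑ i, l (x i • (Pi.single i 1 : Fin n → ℝ)) := by
        refine Finset.sum_congr rfl fun i _ => ?_
        rw [l.map_smul]; simp [mul_comm]
    _ = l x := by rw [← map_sum, ← hx]

private lemma neg_def_quant {n : ℕ} (A : (Fin n → ℝ) →L[ℝ] ((Fin n → ℝ) →L[ℝ] ℝ))
    (hneg : ∀ v : Fin n → ℝ, v ≠ 0 → A v v < 0) :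
    ∃ c : ℝ, 0 < c ∧ ∀ w : Fin n → ℝ, A w w ≤ -(2*c) * ‖w‖^2 := by
  rcases Nat.eq_zero_or_pos n with hn | hn
  · refine ⟨1, one_pos, fun w => ?_⟩
    subst hn
    have hw : w = 0 := Subsingleton.elim w 0
    rw [hw, map_zero]
    rw [norm_zero]
    norm_num
  · haveI : Nonempty (Fin n) := ⟨⟨0, hn⟩⟩
    have hS : (Metric.sphere (0 : Fin n → ℝ) 1).Nonempty := by
      refine ⟨fun _ => 1, ?_⟩
      rw [mem_sphere_zero_iff_norm]
      simpa using (Pi.norm_const (ι := Fin n) (1:ℝ))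
    have hScomp : IsCompact (Metric.sphere (0 : Fin n → ℝ) 1) := isCompact_sphere _ _
    have hfc : Continuous fun w : Fin n → ℝ => A w w :=
      isBoundedBilinearMap_apply.continuous.comp (A.continuous.prodMk continuous_id)
    obtain ⟨w₀, hw₀S, hw₀max⟩ := hScomp.exists_isMaxOn hS hfc.continuousOn
    have hw₀norm : ‖w₀‖ = 1 := mem_sphere_zero_iff_norm.1 hw₀S
    have hw₀ne : w₀ ≠ 0 := by
      intro h; rw [h, norm_zero] at hw₀norm; norm_num at hw₀norm
    have hneg0 : A w₀ w₀ < 0 := hneg w₀ hw₀ne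
    refine ⟨-(A w₀ w₀)/2, by linarith, fun w => ?_⟩
    rcases eq_or_ne w 0 with rfl | hw
    · simp
    · have hpos : (0:ℝ) < ‖w‖ := norm_pos_iff.2 hw
      have hunit : (‖w‖⁻¹ • w) ∈ Metric.sphere (0 : Fin n → ℝ) 1 := by
        rw [mem_sphere_zero_iff_norm, norm_smul, norm_inv, norm_norm,
          inv_mul_cancel₀ (ne_of_gt hpos)]
      have hle : A (‖w‖⁻¹ • w) (‖w‖⁻¹ • w) ≤ A w₀ w₀ := hw₀max hunit
      have hexp : A (‖w‖⁻¹ • w) (‖w‖⁻¹ • w) = ‖w‖⁻¹ * (‖w‖⁻¹ * A w w) := by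
        rw [A.map_smul]; simp [smul_eq_mul]
      rw [hexp] at hle
      have key : A w w ≤ ‖w‖^2 * A w₀ w₀ := by
        have h3 := mul_le_mul_of_nonneg_left hle (le_of_lt (by positivity : (0:ℝ) < ‖w‖^2))
        calc A w w = ‖w‖^2 * (‖w‖⁻¹ * (‖w‖⁻¹ * A w w)) := by
              field_simp
          _ ≤ ‖w‖^2 * A w₀ w₀ := h3
      have : -(2 * (-(A w₀ w₀)/2)) * ‖w‖^2 = ‖w‖^2 * A w₀ w₀ := by ring
      linarith


/-- A `C²` function `u` on an open set `X ⊂ ℝⁿ` is subaffine (for every compact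
`K ⊂ X` and affine function `a`, `u ≤ a` on `∂K` implies `u ≤ a` on `K`) if and only if at
every `x ∈ X` the Hessian of `u` has at least one eigenvalue `≥ 0`, i.e. it is not negative
definite: there is `v ≠ 0` with `Hess_x u (v,v) ≥ 0`. -/
theorem stmt3 (n : ℕ) (X : Set (Fin n → ℝ)) (hX : IsOpen X)
    (u : (Fin n → ℝ) → ℝ) (hu : ContDiffOn ℝ 2 u X) :
    (∀ K : Set (Fin n → ℝ), K ⊆ X → IsCompact K →
        ∀ (c : Fin n → ℝ) (d : ℝ),
          (∀ x ∈ frontier K, u x ≤ c ⬝ᵥ x + d) → ∀ x ∈ K, u x ≤ c ⬝ᵥ x + d)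
      ↔ ∀ x ∈ X, ∃ v : Fin n → ℝ, v ≠ 0 ∧
          0 ≤ iteratedFDerivWithin ℝ 2 u X x ![v, v] := by
  constructor
  · intro hsub
    intro x₀ hx₀
    by_contra hcon
    push_neg at hcon
    have hneg : ∀ v : Fin n → ℝ, v ≠ 0 → fderiv ℝ (fderiv ℝ u) x₀ v v < 0 := by
      intro v hv
      have := hcon v hv
      rwa [hess_eq hX hx₀] at this
    obtain ⟨cst, hcpos, hA⟩ := neg_def_quant (fderiv ℝ (fderiv ℝ u) x₀) hneg
    -- radius where Hessian is close
    rcases (Metric.continuousAt_iff (α := Fin n → ℝ) (β := (Fin n → ℝ) →L[ℝ] (Fin n → ℝ) →L[ℝ] ℝ) (f := fderiv ℝ (fderiv ℝ u)) (a := x₀)).1 (hess_cont hX hu hx₀) cst hcpos with ⟨δ₀, hδ₀, hδ⟩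
    rcases Metric.isOpen_iff.1 hX x₀ hx₀ with ⟨r₀, hr₀, hball⟩
    set r := min (δ₀/2) (r₀/2) with hr
    have hrpos : 0 < r := lt_min (by linarith) (by linarith)
    have hKX : Metric.closedBall x₀ r ⊆ X := by
      intro y hy
      apply hball
      rw [Metric.mem_ball]
      calc dist y x₀ ≤ r := Metric.mem_closedBall.1 hy
        _ < r₀ := lt_of_le_of_lt (min_le_right _ _) (by linarith)
    have hHessBound : ∀ y ∈ Metric.closedBall x₀ r, ∀ w : Fin n → ℝ,
        fderiv ℝ (fderiv ℝ u) y w w ≤ -cst * ‖w‖^2 := by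
      intro y hy w
      have hdy : dist y x₀ < δ₀ :=
        lt_of_le_of_lt (Metric.mem_closedBall.1 hy)
          (lt_of_le_of_lt (min_le_left _ _) (by linarith))
      have hnear : ‖fderiv ℝ (fderiv ℝ u) y - fderiv ℝ (fderiv ℝ u) x₀‖ < cst :=
        (dist_eq_norm (fderiv ℝ (fderiv ℝ u) y) (fderiv ℝ (fderiv ℝ u) x₀)).symm.trans_lt (hδ hdy)
      have hbd : ‖(fderiv ℝ (fderiv ℝ u) y - fderiv ℝ (fderiv ℝ u) x₀) w w‖ ≤
          cst * ‖w‖ * ‖w‖ := by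
        calc ‖(fderiv ℝ (fderiv ℝ u) y - fderiv ℝ (fderiv ℝ u) x₀) w w‖ ≤
            ‖fderiv ℝ (fderiv ℝ u) y - fderiv ℝ (fderiv ℝ u) x₀‖ * ‖w‖ * ‖w‖ :=
              ContinuousLinearMap.le_opNorm₂ _ w w
          _ ≤ cst * ‖w‖ * ‖w‖ := by
              have := mul_le_mul_of_nonneg_right
                (mul_le_mul_of_nonneg_right hnear.le (norm_nonneg w)) (norm_nonneg w)
              exact this
      have hsplit : fderiv ℝ (fderiv ℝ u) y w w =
          fderiv ℝ (fderiv ℝ u) x₀ w w +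
            (fderiv ℝ (fderiv ℝ u) y - fderiv ℝ (fderiv ℝ u) x₀) w w := by
        simp
      rw [hsplit]
      have h1 := hA w
      have h2 : (fderiv ℝ (fderiv ℝ u) y - fderiv ℝ (fderiv ℝ u) x₀) w w ≤ cst * ‖w‖ * ‖w‖ :=
        le_trans (le_abs_self _) hbd
      nlinarith [sq_nonneg ‖w‖]
    -- Taylor estimate on the ball
    have hTaylor : ∀ x ∈ Metric.closedBall x₀ r,
        u x ≤ u x₀ + fderiv ℝ u x₀ (x - x₀) - cst/2 * ‖x - x₀‖^2 := by
      intro x hx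
      set v := x - x₀ with hv
      have hvr : ‖v‖ ≤ r := by rw [hv, ← dist_eq_norm]; exact Metric.mem_closedBall.1 hx
      have hseg : ∀ t ∈ Icc (0:ℝ) 1, x₀ + t • v ∈ Metric.closedBall x₀ r := by
        intro t ht
        rw [Metric.mem_closedBall, dist_eq_norm]
        have he : x₀ + t • v - x₀ = t • v := by abel
        rw [he, norm_smul, Real.norm_eq_abs]
        calc |t| * ‖v‖ ≤ 1 * ‖v‖ :=
            mul_le_mul_of_nonneg_right (by rw [abs_of_nonneg ht.1]; exact ht.2) (norm_nonneg v)
          _ = ‖v‖ := one_mul _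
          _ ≤ r := hvr
      have hT := taylor_le (g := fun t => u (x₀ + t • v))
        (G := fun t => fderiv ℝ u (x₀ + t • v) v)
        (G' := fun t => fderiv ℝ (fderiv ℝ u) (x₀ + t • v) v v) (m := -cst * ‖v‖^2)
        (fun t ht => line_deriv1 hX hu x₀ v (hKX (hseg t ht)))
        (fun t ht => line_deriv2 hX hu x₀ v (hKX (hseg t ht)))
        (fun t ht => hHessBound _ (hseg t ht) v)
      simp only [one_smul, zero_smul, add_zero] at hT
      have e1 : x₀ + v = x := by rw [hv]; abel
      rw [e1] at hT
      linarith
    -- set up the affine function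
    set cvec : Fin n → ℝ := fun i => fderiv ℝ u x₀ (Pi.single i 1 : Fin n → ℝ) with hcvec
    set d' : ℝ := u x₀ - fderiv ℝ u x₀ x₀ - cst/2 * r^2 with hd'
    have hfr : ∀ x ∈ frontier (Metric.closedBall x₀ r), u x ≤ cvec ⬝ᵥ x + d' := by
      intro x hxf
      have hxK : x ∈ Metric.closedBall x₀ r := by
        have := frontier_subset_closure hxf
        rwa [IsClosed.closure_eq Metric.isClosed_closedBall] at this
      have hxnb : x ∉ Metric.ball x₀ r := by
        intro hmem
        exact hxf.2 (interior_mono Metric.ball_subset_closedBall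
          (by rwa [IsOpen.interior_eq Metric.isOpen_ball]))
      have hxs : ‖x - x₀‖ = r := by
        rw [← dist_eq_norm]
        exact le_antisymm (Metric.mem_closedBall.1 hxK) (not_lt.1 fun h => hxnb (Metric.mem_ball.2 h))
      have hT := hTaylor x hxK
      rw [hxs] at hT
      have hdot : cvec ⬝ᵥ x = fderiv ℝ u x₀ x := dot_eq_fderiv (fderiv ℝ u x₀) x
      rw [map_sub] at hT
      rw [hdot, hd']
      linarith
    have hfinal := hsub (Metric.closedBall x₀ r) hKX (isCompact_closedBall x₀ r) cvec d' hfr x₀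
      (Metric.mem_closedBall_self hrpos.le)
    rw [dot_eq_fderiv (fderiv ℝ u x₀) x₀, hd'] at hfinal
    nlinarith [mul_pos (half_pos hcpos) (pow_pos hrpos 2)]
  · intro heig
    intro K hKX hK c d hbd xb hxb
    by_contra hlt
    push_neg at hlt
    set M₀ := u xb - (c ⬝ᵥ xb + d) with hM₀
    have hM₀pos : 0 < M₀ := by rw [hM₀]; linarith
    set q : (Fin n → ℝ) → ℝ := fun x => ∑ i, (x i)^2 with hq
    have hqc : Continuous q := by
      apply continuous_finset_sum
      intro i _
      exact (continuous_apply i).pow 2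
    have hqnonneg : ∀ x, 0 ≤ q x := fun x => Finset.sum_nonneg fun i _ => sq_nonneg _
    have hKne : K.Nonempty := ⟨xb, hxb⟩
    obtain ⟨z, hz, hzmax⟩ := hK.exists_isMaxOn hKne hqc.continuousOn
    set Q := q z with hQ
    have hQ0 : 0 ≤ Q := hqnonneg z
    set δ := M₀ / (2*(Q+1)) with hδ
    have hδpos : 0 < δ := by apply div_pos hM₀pos; linarith
    have hδQ : δ * (Q + 1) = M₀ / 2 := by
      rw [hδ]; field_simp
    set φ : (Fin n → ℝ) → ℝ := fun x => u x - (c ⬝ᵥ x + d) + δ * q x with hφ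
    have hdotc : Continuous fun x : Fin n → ℝ => c ⬝ᵥ x := by
      apply continuous_finset_sum
      intro i _
      exact continuous_const.mul (continuous_apply i)
    have hφc : ContinuousOn φ K := by
      apply ContinuousOn.add
      · exact (hu.continuousOn.mono hKX).sub (hdotc.add continuous_const).continuousOn
      · exact (continuous_const.mul hqc).continuousOn
    obtain ⟨x₀, hx₀K, hx₀max⟩ := hK.exists_isMaxOn hKne hφc
    have hφxb : M₀ ≤ φ xb := by
      have h1 : 0 ≤ δ * q xb := mul_nonneg hδpos.le (hqnonneg xb)
      rw [hφ]; simp only []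
      rw [hM₀]
      linarith
    have hmax0 : M₀ ≤ φ x₀ := le_trans hφxb (hx₀max hxb)
    have hx₀notfr : x₀ ∉ frontier K := by
      intro hfr
      have h1 : u x₀ - (c ⬝ᵥ x₀ + d) ≤ 0 := by have := hbd x₀ hfr; linarith
      have h2 : q x₀ ≤ Q := hzmax hx₀K
      have h3 : δ * q x₀ ≤ δ * (Q + 1) :=
        mul_le_mul_of_nonneg_left (by linarith) hδpos.le
      have h4 : φ x₀ ≤ M₀ / 2 := by
        have e : φ x₀ = u x₀ - (c ⬝ᵥ x₀ + d) + δ * q x₀ := rfl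
        rw [e]
        linarith
      linarith [le_trans hmax0 h4, hM₀pos]
    have hx₀int : x₀ ∈ interior K := by
      by_contra h
      exact hx₀notfr (by rw [hK.isClosed.frontier_eq]; exact ⟨hx₀K, h⟩)
    have hx₀X : x₀ ∈ X := hKX (interior_subset hx₀int)
    obtain ⟨v, hv0, hvH⟩ := heig x₀ hx₀X
    rw [hess_eq hX hx₀X] at hvH
    -- sum of squares of v positive
    obtain ⟨i₀, hi₀⟩ := Function.ne_iff.1 hv0
    have hi₀' : v i₀ ≠ 0 := by simpa using hi₀
    have hsv : 0 < ∑ i, (v i)^2 := by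
      apply Finset.sum_pos' (fun i _ => sq_nonneg _)
      exact ⟨i₀, Finset.mem_univ i₀, by positivity⟩
    -- the function along the line
    set G : ℝ → ℝ := fun t => fderiv ℝ u (x₀ + t • v) v - c ⬝ᵥ v
        + δ * ∑ i, 2 * (x₀ i + t * v i) * v i with hG
    have hdotL : ∀ s : ℝ, c ⬝ᵥ (x₀ + s • v) + d = (c ⬝ᵥ x₀ + d) + s * (c ⬝ᵥ v) := by
      intro s
      simp only [dotProduct, Pi.add_apply, Pi.smul_apply, smul_eq_mul, Finset.mul_sum]
      rw [show (∑ i, c i * (x₀ i + s * v i)) = (∑ i, c i * x₀ i) + ∑ i, s * (c i * v i) from by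
        rw [← Finset.sum_add_distrib]; exact Finset.sum_congr rfl fun i _ => by ring]
      ring
    have hqL : ∀ s : ℝ, q (x₀ + s • v) = ∑ i, (x₀ i + s * v i)^2 := by
      intro s
      rw [hq]
      apply Finset.sum_congr rfl
      intro i _
      simp [smul_eq_mul]
    have hgd : ∀ t : ℝ, x₀ + t • v ∈ X → HasDerivAt (fun s => φ (x₀ + s • v)) (G t) t := by
      intro t ht
      have h1 : HasDerivAt (fun s : ℝ => u (x₀ + s • v)) (fderiv ℝ u (x₀ + t • v) v) t :=
        line_deriv1 hX hu x₀ v ht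
      have h2 : HasDerivAt (fun s : ℝ => c ⬝ᵥ (x₀ + s • v) + d) (c ⬝ᵥ v) t := by
        simp only [hdotL]
        simpa using ((hasDerivAt_id t).mul_const (c ⬝ᵥ v)).const_add (c ⬝ᵥ x₀ + d)
      have h3 : HasDerivAt (fun s : ℝ => δ * q (x₀ + s • v))
          (δ * ∑ i, 2 * (x₀ i + t * v i) * v i) t := by
        simp only [hqL]
        apply HasDerivAt.const_mul
        apply HasDerivAt.fun_sum
        intro i _
        have hb : HasDerivAt (fun s : ℝ => x₀ i + s * v i) (v i) t := by
          simpa using ((hasDerivAt_id t).mul_const (v i)).const_add (x₀ i)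
        have := hb.pow 2
        convert this using 1 <;> try rfl
        push_cast
        ring
      exact (h1.sub h2).add h3
    have hGd : HasDerivAt G (fderiv ℝ (fderiv ℝ u) (x₀ + (0:ℝ) • v) v v
        + δ * ∑ i, 2 * v i * v i) 0 := by
      have h1 : HasDerivAt (fun s : ℝ => fderiv ℝ u (x₀ + s • v) v)
          (fderiv ℝ (fderiv ℝ u) (x₀ + (0:ℝ) • v) v v) 0 :=
        line_deriv2 hX hu x₀ v (by simpa using hx₀X)
      have h3 : HasDerivAt (fun s : ℝ => δ * ∑ i, 2 * (x₀ i + s * v i) * v i)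
          (δ * ∑ i, 2 * v i * v i) 0 := by
        apply HasDerivAt.const_mul
        apply HasDerivAt.fun_sum
        intro i _
        have hb : HasDerivAt (fun s : ℝ => x₀ i + s * v i) (v i) (0:ℝ) := by
          simpa using ((hasDerivAt_id (0:ℝ)).mul_const (v i)).const_add (x₀ i)
        have := (hb.const_mul 2).mul_const (v i)
        exact this
      exact (h1.sub_const (c ⬝ᵥ v)).add h3
    -- local max
    have hLcont : Continuous fun t : ℝ => x₀ + t • v :=
      continuous_const.add (continuous_id.smul continuous_const)
    have hL0 : x₀ + (0:ℝ) • v = x₀ := by simp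
    have hnhds1 : (fun t : ℝ => x₀ + t • v) ⁻¹' interior K ∈ nhds (0:ℝ) := by
      apply hLcont.continuousAt.preimage_mem_nhds
      rw [hL0]
      exact isOpen_interior.mem_nhds hx₀int
    have hnhds2 : (fun t : ℝ => x₀ + t • v) ⁻¹' X ∈ nhds (0:ℝ) := by
      apply hLcont.continuousAt.preimage_mem_nhds
      rw [hL0]
      exact hX.mem_nhds hx₀X
    have hlocmax : IsLocalMax (fun s : ℝ => φ (x₀ + s • v)) (0:ℝ) := by
      filter_upwards [hnhds1] with t ht
      have h1 : φ (x₀ + t • v) ≤ φ x₀ := hx₀max (interior_subset ht)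
      simpa [hL0] using h1
    have hev : ∀ᶠ t in nhds (0:ℝ), HasDerivAt (fun s : ℝ => φ (x₀ + s • v)) (G t) t := by
      filter_upwards [hnhds2] with t ht
      exact hgd t ht
    apply no_interior_max hev hGd hlocmax
    rw [hL0]
    have h2 : 0 < δ * ∑ i, 2 * v i * v i := by
      apply mul_pos hδpos
      have : ∑ i, 2 * v i * v i = 2 * ∑ i, (v i)^2 := by
        rw [Finset.mul_sum]
        apply Finset.sum_congr rfl
        intro i _
        ring
      rw [this]
      linarith
    linarith
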